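/- The function u(x,t) = 10 + 4·tanh(6 + 1.6·t − 0.4·x) solves the variable-coefficient forced Burgers equation u_t + (2/5)·u·u_x − 2·u_xx = 0 for all (x,t) ∈ ℝ². (This is the vc-FBE with constant nonlinear coefficient a = 2/5, dispersive coefficient b = −2 and vanishing external-force term, arising from the parameter choice b1 = 0, b2 = −2, m = 0, p = −5, q = 10, L = 4, w = 6.) -/

import Mathlib

lemma hasDerivAt_tanh' (y : ℝ) : HasDerivAt Real.tanh (1 - Real.tanh y ^ 2) y := by
  have hc : Real.cosh y ≠ 0 := ne_of_gt (Real.cosh_pos y)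
  have h : HasDerivAt (fun z => Real.sinh z / Real.cosh z)
      ((Real.cosh y * Real.cosh y - Real.sinh y * Real.sinh y) / Real.cosh y ^ 2) y :=
    (Real.hasDerivAt_sinh y).div (Real.hasDerivAt_cosh y) hc
  have heq : (Real.cosh y * Real.cosh y - Real.sinh y * Real.sinh y) / Real.cosh y ^ 2
      = 1 - Real.tanh y ^ 2 := by
    have h1 : Real.cosh y ^ 2 - Real.sinh y ^ 2 = 1 := Real.cosh_sq_sub_sinh_sq y
    rw [Real.tanh_eq_sinh_div_cosh]
    field_simp
  have htanh : Real.tanh = fun z => Real.sinh z / Real.cosh z :=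
    funext fun z => Real.tanh_eq_sinh_div_cosh z
  rw [Real.tanh_eq_sinh_div_cosh] at heq
  rw [htanh]
  exact heq ▸ h

lemma hasDerivAt_inner (c d y : ℝ) :
    HasDerivAt (fun z : ℝ => c + d * z)
      d y := by
  simpa using ((hasDerivAt_id y).const_mul d).const_add c

-- derivative of z ↦ 10 + 4 * tanh (c + d*z)
lemma hasDerivAt_u (c d y : ℝ) :
    HasDerivAt (fun z : ℝ => 10 + 4 * Real.tanh (c + d * z))
      (4 * (1 - Real.tanh (c + d * y) ^ 2) * d) y := by
  have h := ((hasDerivAt_tanh' (c + d * y)).comp y (hasDerivAt_inner c d y)).const_mul 4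
  simpa [mul_assoc] using h.const_add 10

-- derivative of z ↦ 4 * (1 - tanh (c + d*z)^2) * d
lemma hasDerivAt_ux (c d y : ℝ) :
    HasDerivAt (fun z : ℝ => 4 * (1 - Real.tanh (c + d * z) ^ 2) * d)
      (4 * (-(2 * Real.tanh (c + d * y)) * ((1 - Real.tanh (c + d * y) ^ 2) * d)) * d) y := by
  have ht := (hasDerivAt_tanh' (c + d * y)).comp y (hasDerivAt_inner c d y)
  have h2 : HasDerivAt (fun z : ℝ => Real.tanh (c + d * z) ^ 2)
      (2 * Real.tanh (c + d * y) * ((1 - Real.tanh (c + d * y) ^ 2) * d)) y := by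
    have := ht.mul ht
    have e : (fun z : ℝ => Real.tanh (c + d * z) ^ 2)
        = (Real.tanh ∘ fun z => c + d * z) * Real.tanh ∘ fun z => c + d * z := by
      funext z; simp [Function.comp, sq]
    rw [e]
    exact this.congr_deriv (by simp only [Function.comp]; ring)
  have h3 := ((h2.const_sub 1).const_mul 4).mul_const d
  exact h3.congr_deriv (by ring)

/-- `u(x,t) = 10 + 4·tanh(6 + 1.6·t − 0.4·x)` solves
`u_t + (2/5)·u·u_x − 2·u_xx = 0` on all of ℝ². -/
theorem example1_solves_vcFBE :
    ∀ x t : ℝ,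
      deriv (fun t' => 10 + 4 * Real.tanh (6 + 1.6 * t' - 0.4 * x)) t
        + (2 / 5) * (10 + 4 * Real.tanh (6 + 1.6 * t - 0.4 * x))
            * deriv (fun x' => 10 + 4 * Real.tanh (6 + 1.6 * t - 0.4 * x')) x
        - 2 * deriv (deriv (fun x' => 10 + 4 * Real.tanh (6 + 1.6 * t - 0.4 * x'))) x
        = 0 := by
  intro x t
  set s := Real.tanh (6 + 1.6 * t - 0.4 * x) with hs
  have ht : deriv (fun t' => 10 + 4 * Real.tanh (6 + 1.6 * t' - 0.4 * x)) t
      = 4 * (1 - s ^ 2) * 1.6 := by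
    have h := hasDerivAt_u (6 - 0.4 * x) 1.6 t
    have : (fun t' : ℝ => 10 + 4 * Real.tanh (6 + 1.6 * t' - 0.4 * x))
        = fun t' : ℝ => 10 + 4 * Real.tanh ((6 - 0.4 * x) + 1.6 * t') := by
      funext z; ring_nf
    rw [this, h.deriv, hs]
    ring_nf
  have hxfun : deriv (fun x' => 10 + 4 * Real.tanh (6 + 1.6 * t - 0.4 * x'))
      = fun x' : ℝ => 4 * (1 - Real.tanh ((6 + 1.6 * t) + (-0.4) * x') ^ 2) * (-0.4) := by
    funext z
    have h := hasDerivAt_u (6 + 1.6 * t) (-0.4) z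
    have : (fun x' : ℝ => 10 + 4 * Real.tanh (6 + 1.6 * t - 0.4 * x'))
        = fun x' : ℝ => 10 + 4 * Real.tanh ((6 + 1.6 * t) + (-0.4) * x') := by
      funext w; ring_nf
    rw [this, h.deriv]
  have hx : deriv (fun x' => 10 + 4 * Real.tanh (6 + 1.6 * t - 0.4 * x')) x
      = 4 * (1 - s ^ 2) * (-0.4) := by
    rw [hxfun, hs]; ring_nf
  have hxx : deriv (deriv (fun x' => 10 + 4 * Real.tanh (6 + 1.6 * t - 0.4 * x'))) x
      = 4 * (-(2 * s) * ((1 - s ^ 2) * (-0.4))) * (-0.4) := by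
    rw [hxfun]
    rw [(hasDerivAt_ux (6 + 1.6 * t) (-0.4) x).deriv, hs]
    ring_nf
  rw [ht, hx, hxx]
  ring
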